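/- In a valid modular DRUP proof π (without deletions), for every forward clause cls ∈ L_F(π), the main module's clauses together with the forward clauses copied before cls entail all backward clauses copied before cls: Φ_m ∧ L_F(π^{id(cls)}) ⊨ L_B(π^{id(cls)}). -/
import Mathlib


/-- Propositional variables. -/
abbrev Var := ℕ
/-- A literal is a variable together with a polarity. -/
abbrev Lit := Var × Bool
/-- A clause is a finite set of literals. -/
abbrev Clause := Finset Lit
/-- A total truth assignment. -/
abbrev Assignment := Var → Bool

/-- Negation of a literal. -/
def Lit.neg (l : Lit) : Lit := (l.1, !l.2)

/-- An assignment satisfies a literal. -/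
def satLit (σ : Assignment) (l : Lit) : Prop := σ l.1 = l.2
/-- An assignment satisfies a clause (some literal is true). -/
def satClause (σ : Assignment) (C : Clause) : Prop := ∃ l ∈ C, satLit σ l
/-- An assignment satisfies a set of clauses. -/
def satSet (σ : Assignment) (Γ : Set Clause) : Prop := ∀ C ∈ Γ, satClause σ C
/-- Semantic consequence: every model of Γ satisfies C. -/
def entails (Γ : Set Clause) (C : Clause) : Prop :=
  ∀ σ : Assignment, satSet σ Γ → satClause σ C

/-- Unit-propagation closure: the least set of literals containing the
assumptions `A` and closed under the unit-propagation rule for clauses of `Γ`: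
if all literals of a clause but one are falsified (their negations derived),
the remaining literal is derived. -/
inductive UPC (Γ : Set Clause) (A : Set Lit) : Lit → Prop
  | assm {l : Lit} : l ∈ A → UPC Γ A l
  | prop {C : Clause} {l : Lit} : C ∈ Γ → l ∈ C →
      (∀ l' ∈ C, l' ≠ l → UPC Γ A (Lit.neg l')) → UPC Γ A l

/-- Unit propagation from `Γ` under assumptions `A` reaches a conflict:
some clause of `Γ` has all its literals falsified by the closure. -/
def upConflict (Γ : Set Clause) (A : Set Lit) : Prop :=
  ∃ C ∈ Γ, ∀ l ∈ C, UPC Γ A (Lit.neg l)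

/-- `RUP Γ C` (written `Γ ⊢_UP C`): unit propagation from `Γ` together with the
negations of the literals of `C` reaches a conflict. -/
def RUP (Γ : Set Clause) (C : Clause) : Prop :=
  upConflict Γ {l | ∃ m ∈ C, l = Lit.neg m}

/-- The two modules: secondary `s` and main `m`. -/
inductive ModIdx | s | m
deriving DecidableEq

/-- A step of a modular DRUP proof. -/
inductive MStep
  | asserted (idx : ModIdx) (c : Clause)
  | rup (idx : ModIdx) (c : Clause)
  | cp (src dst : ModIdx) (c : Clause)
  | del (idx : ModIdx) (c : Clause)
deriving DecidableEq

/-- A step adds clause `c` to module `idx` (by assertion, rup, or copy into `idx`). -/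
def MStep.addsTo : MStep → ModIdx → Clause → Prop
  | .asserted i c, j, d => i = j ∧ c = d
  | .rup i c, j, d => i = j ∧ c = d
  | .cp _ i c, j, d => i = j ∧ c = d
  | .del _ _, _, _ => False

/-- Active clauses of module `idx`: added to `idx` and not later deleted from `idx`. -/
def mactive (π : List MStep) (idx : ModIdx) : Set Clause :=
  {c | ∃ i, ∃ hi : i < π.length, (π[i]'hi).addsTo idx c ∧
      ∀ k, ∀ hk : k < π.length, i < k → (π[k]'hk) ≠ MStep.del idx c}

/-- All clauses asserted into module `idx`. -/
def allasserted (π : List MStep) (idx : ModIdx) : Set Clause :=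
  {c | MStep.asserted idx c ∈ π}

/-- Validity of a modular DRUP proof: every rup step is RUP w.r.t. the active
clauses of its module, every copy step's clause is RUP in its source module,
and the final step adds ⊥ to module `m` (by rup or by copy from `s`). -/
def validModular (π : List MStep) : Prop :=
  (∀ i, ∀ hi : i < π.length, ∀ idx c,
      (π[i]'hi) = MStep.rup idx c → RUP (mactive (π.take i) idx) c) ∧
  (∀ i, ∀ hi : i < π.length, ∀ src dst c,
      (π[i]'hi) = MStep.cp src dst c → RUP (mactive (π.take i) src) c) ∧
  ∃ hne : π ≠ [],
    π.getLast hne = MStep.rup ModIdx.m ∅ ∨ π.getLast hne = MStep.cp ModIdx.s ModIdx.m ∅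

/-- The proof contains no deletion steps. -/
def noDel (π : List MStep) : Prop := ∀ st ∈ π, ∀ idx c, st ≠ MStep.del idx c

/-- Backward clauses of a prefix: clauses copied from `m` to `s`. -/
def LB (π : List MStep) : Set Clause := {c | MStep.cp ModIdx.m ModIdx.s c ∈ π}
/-- Forward clauses of a prefix: clauses copied from `s` to `m`. -/
def LF (π : List MStep) : Set Clause := {c | MStep.cp ModIdx.s ModIdx.m c ∈ π}

/-- `i` is the position of the first copy step from `s` to `m` for clause `c`. -/
def firstCpF (π : List MStep) (c : Clause) (i : ℕ) : Prop :=
  ∃ hi : i < π.length, (π[i]'hi) = MStep.cp ModIdx.s ModIdx.m c ∧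
    ∀ j, ∀ hj : j < π.length, j < i → (π[j]'hj) ≠ MStep.cp ModIdx.s ModIdx.m c

lemma satLit_neg (σ : Assignment) (l : Lit) : satLit σ (Lit.neg l) ↔ ¬ satLit σ l := by
  simp [satLit, Lit.neg, Bool.eq_not_iff]

lemma UPC_sound {Γ : Set Clause} {A : Set Lit} {σ : Assignment}
    (hΓ : satSet σ Γ) (hA : ∀ l ∈ A, satLit σ l) :
    ∀ l, UPC Γ A l → satLit σ l := by
  intro l h
  induction h with
  | assm h => exact hA _ h
  | @prop C l hC hl hprev ih =>
    rcases hΓ _ hC with ⟨l', hl', hsat⟩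
    by_cases he : l' = l
    · subst he; exact hsat
    · exact absurd hsat ((satLit_neg σ l').1 (ih _ hl' he))

lemma RUP_entails {Γ : Set Clause} {C : Clause} (h : RUP Γ C) : entails Γ C := by
  intro σ hσ
  by_contra hnc
  obtain ⟨D, hD, hall⟩ := h
  have hA : ∀ l ∈ {l | ∃ m ∈ C, l = Lit.neg m}, satLit σ l := by
    rintro l ⟨m, hm, rfl⟩
    rw [satLit_neg]
    intro hs; exact hnc ⟨m, hm, hs⟩
  rcases hσ _ hD with ⟨l, hl, hsl⟩
  exact (satLit_neg σ l).1 (UPC_sound hσ hA _ (hall l hl)) hsl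

lemma entails_of_mem {Γ : Set Clause} {C : Clause} (h : C ∈ Γ) : entails Γ C :=
  fun _ hσ => hσ _ h

lemma entails_mono {Γ Δ : Set Clause} {C : Clause} (hsub : Γ ⊆ Δ)
    (h : entails Γ C) : entails Δ C :=
  fun σ hσ => h σ (fun D hD => hσ D (hsub hD))

lemma entails_trans {Γ Δ : Set Clause} {C : Clause}
    (h : entails Γ C) (h2 : ∀ D ∈ Γ, entails Δ D) : entails Δ C :=
  fun σ hσ => h σ (fun D hD => h2 D hD σ hσ)

lemma mem_mactive_of_noDel {π : List MStep} (hnd : noDel π) {idx : ModIdx} {c : Clause} :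
    c ∈ mactive π idx ↔ ∃ i, ∃ hi : i < π.length, (π[i]'hi).addsTo idx c := by
  constructor
  · rintro ⟨i, hi, hadd, _⟩; exact ⟨i, hi, hadd⟩
  · rintro ⟨i, hi, hadd⟩
    exact ⟨i, hi, hadd, fun k hk _ => hnd _ (List.getElem_mem hk) idx c⟩

lemma noDel_take {π : List MStep} (hnd : noDel π) (n : ℕ) : noDel (π.take n) :=
  fun st hst => hnd st (List.mem_of_mem_take hst)

lemma LF_take_mono {π : List MStep} {p n : ℕ} (h : p ≤ n) :
    LF (π.take p) ⊆ LF (π.take n) := by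
  intro c hc
  have : π.take p = (π.take n).take p := by rw [List.take_take, min_eq_left h]
  exact (List.take_prefix p (π.take n)).subset (this ▸ hc)

lemma main_entail (π : List MStep) (Φm : Set Clause)
    (hval : validModular π) (hnd : noDel π)
    (hm : allasserted π ModIdx.m ⊆ Φm) :
    ∀ n, ∀ c ∈ mactive (π.take n) ModIdx.m, entails (Φm ∪ LF (π.take n)) c := by
  intro n
  induction n using Nat.strong_induction_on with
  | _ n ih =>
    intro c hc
    rw [mem_mactive_of_noDel (noDel_take hnd n)] at hc
    obtain ⟨p, hp, hadd⟩ := hc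
    have hpn : p < n := by
      have := hp; simp [List.length_take] at this; omega
    have hp' : p < π.length := by
      have := hp; simp [List.length_take] at this; omega
    have hget : (π.take n)[p]'hp = π[p]'hp' := by
      simp [List.getElem_take]
    -- helper for RUP-derived clauses w.r.t. mactive (π.take p) m
    have hrupcase : RUP (mactive (π.take p) ModIdx.m) c →
        entails (Φm ∪ LF (π.take n)) c := by
      intro hr
      refine entails_trans (RUP_entails hr) ?_
      intro D hD
      exact entails_mono
        (Set.union_subset_union_right Φm (LF_take_mono hpn.le))
        (ih p hpn D hD)
    rcases hstep : π[p]'hp' with ⟨i, c'⟩ | ⟨i, c'⟩ | ⟨src, dst, c'⟩ | ⟨i, c'⟩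
    · -- asserted
      rw [hget, hstep] at hadd
      obtain ⟨rfl, rfl⟩ := hadd
      refine entails_of_mem (Set.mem_union_left _ (hm ?_))
      show MStep.asserted ModIdx.m c' ∈ π
      rw [← hstep]; exact List.getElem_mem hp'
    · -- rup
      rw [hget, hstep] at hadd
      obtain ⟨rfl, rfl⟩ := hadd
      exact hrupcase (hval.1 p hp' _ _ hstep)
    · -- cp
      rw [hget, hstep] at hadd
      obtain ⟨rfl, rfl⟩ := hadd
      cases src with
      | s =>
        refine entails_of_mem (Set.mem_union_right _ ?_)
        show MStep.cp ModIdx.s ModIdx.m c' ∈ π.take n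
        rw [← hstep, ← hget]; exact List.getElem_mem hp
      | m =>
        exact hrupcase (hval.2.1 p hp' _ _ _ hstep)
    · -- del
      rw [hget, hstep] at hadd
      exact hadd.elim

/-- for every forward clause `cls ∈ L_F(π)`, the main module's
clauses `Φm` together with the forward clauses copied before `cls` entail all
backward clauses copied before `cls`. -/
theorem forward_entail_backward (π : List MStep) (Φs Φm : Set Clause)
    (hval : validModular π) (hnd : noDel π)
    (hs : allasserted π ModIdx.s ⊆ Φs) (hm : allasserted π ModIdx.m ⊆ Φm) :
    ∀ cls ∈ LF π, ∀ i, firstCpF π cls i →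
      ∀ b ∈ LB (π.take i), entails (Φm ∪ LF (π.take i)) b := by
  intro cls _ i _ b hb
  obtain ⟨j, hj, hstep⟩ := List.mem_iff_getElem.1 hb
  have hji : j < i := by
    have := hj; simp [List.length_take] at this; omega
  have hj' : j < π.length := by
    have := hj; simp [List.length_take] at this; omega
  have hstep' : π[j]'hj' = MStep.cp ModIdx.m ModIdx.s b := by
    rw [← hstep]; simp [List.getElem_take]
  have hr := hval.2.1 j hj' _ _ _ hstep'
  refine entails_trans (RUP_entails hr) ?_
  intro D hD
  exact entails_mono
    (Set.union_subset_union_right Φm (LF_take_mono hji.le))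
    (main_entail π Φm hval hnd hm j D hD)
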